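/- Let q ≥ 3 be a power of a prime, n ≥ 2, and 1 ≤ k ≤ n − 2. Consider the graph whose vertices are the n×n hermitian matrices over F_{q²} of rank k, with an edge between A and B exactly when rank(A − B) = 1. Its connected components are precisely the sets {P(Ẋ ⊕ 0_{n−k})P* : Ẋ ∈ HGL_k(F_{q²})} where P ranges over invertible n×n matrices over F_{q²}, and the number of components equals the number of k-dimensional linear subspaces of F_{q²}ⁿ, i.e., the Gaussian binomial coefficient [n choose k] with parameter q². -/

import Mathlib

open Matrix

/-- Conjugate transpose with respect to the involution `x ↦ x ^ q` on `F = F_{q²}`. -/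
def ctrans (q : ℕ) {F : Type*} [Field F] {m n : Type*} (A : Matrix m n F) : Matrix n m F :=
  Matrix.of fun i j => (A j i) ^ q

/-- `A` is hermitian with respect to the involution `x ↦ x ^ q`. -/
def IsHerm (q : ℕ) {F : Type*} [Field F] {n : Type*} (A : Matrix n n F) : Prop :=
  ctrans q A = A

/-- The rank-one hermitian matrix `x x*`. -/
def outerq (q : ℕ) {F : Type*} [Field F] {n : Type*} (x : n → F) : Matrix n n F :=
  Matrix.of fun i j => x i * (x j) ^ q

/-- The set `{A + λ x x* : λ ∈ F_q, λ ≠ 0}` (the fixed field `F_q` is `{λ : λ ^ q = λ}`). -/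
def leafSet (q : ℕ) {F : Type*} [Field F] {n : Type*} (A : Matrix n n F) (x : n → F) :
    Set (Matrix n n F) :=
  {B | ∃ lam : F, lam ^ q = lam ∧ lam ≠ 0 ∧ B = A + lam • outerq q x}

/-- `L` is a leaf of the hermitian matrix `A`: it is of the form
`{A + λ x x* : λ ∈ F_q, λ ≠ 0}` for a nonzero vector `x` and all of its members have
rank `rank A + 1`. -/
def IsLeafOf (q : ℕ) {F : Type*} [Field F] {n : Type*} [Fintype n] (L : Set (Matrix n n F))
    (A : Matrix n n F) : Prop :=
  ∃ x : n → F, x ≠ 0 ∧ L = leafSet q A x ∧ ∀ B ∈ L, B.rank = A.rank + 1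

/-- The graph on the hermitian `ι × ι` matrices of rank `r`, with edges given by
rank-one differences. -/
def rkGraph (q : ℕ) {F : Type*} [Field F] (ι : Type*) [Fintype ι] (r : ℕ) :
    SimpleGraph {A : Matrix ι ι F // IsHerm q A ∧ A.rank = r} :=
  SimpleGraph.fromRel fun A B => (A.1 - B.1).rank = 1

namespace Stmt14

variable {q : ℕ} {F : Type*} [Field F]

/-- bundled hypotheses on the Frobenius-type map -/
structure Good (q : ℕ) (F : Type*) [Field F] : Prop where
  hq0 : q ≠ 0
  hadd : ∀ x y : F, (x + y) ^ q = x ^ q + y ^ q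
  hiv : ∀ x : F, (x ^ q) ^ q = x

namespace Good

variable (hG : Good q F)
include hG

lemma psum {ι : Type*} (s : Finset ι) (f : ι → F) :
    (∑ i ∈ s, f i) ^ q = ∑ i ∈ s, (f i) ^ q := by
  classical
  induction s using Finset.induction with
  | empty => simp [zero_pow hG.hq0]
  | insert a s' h ih => rw [Finset.sum_insert h, Finset.sum_insert h, hG.hadd, ih]

omit hG in
lemma ctrans_apply {m n : Type*} (A : Matrix m n F) (i : n) (j : m) :
    ctrans q A i j = (A j i) ^ q := rfl

lemma ctrans_mul {l m n : Type*} [Fintype m] (A : Matrix l m F) (B : Matrix m n F) :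
    ctrans q (A * B) = ctrans q B * ctrans q A := by
  ext i j
  show ((A * B) j i) ^ q = _
  rw [Matrix.mul_apply, hG.psum, Matrix.mul_apply]
  exact Finset.sum_congr rfl fun l _ => by rw [mul_pow, mul_comm]; rfl

lemma ctrans_ctrans {m n : Type*} (A : Matrix m n F) : ctrans q (ctrans q A) = A := by
  ext i j; exact hG.hiv _

lemma ctrans_one {n : Type*} [DecidableEq n] [Fintype n] :
    ctrans q (1 : Matrix n n F) = 1 := by
  ext i j
  show ((1 : Matrix n n F) j i) ^ q = (1 : Matrix n n F) i j
  by_cases h : i = j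
  · subst h; simp [Matrix.one_apply]
  · rw [Matrix.one_apply_ne fun hji => h hji.symm, Matrix.one_apply_ne h, zero_pow hG.hq0]

omit hG in
lemma ctrans_sub {m n : Type*} (hG : Good q F) (A B : Matrix m n F) :
    ctrans q (A - B) = ctrans q A - ctrans q B := by
  ext i j
  show ((A - B) j i) ^ q = (A j i) ^ q - (B j i) ^ q
  have h := hG.hadd (A j i - B j i) (B j i)
  rw [sub_add_cancel] at h
  rw [Matrix.sub_apply]
  linear_combination -h

omit hG in
lemma ctrans_smul {m n : Type*} (c : F) (A : Matrix m n F) :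
    ctrans q (c • A) = c ^ q • ctrans q A := by
  ext i j
  show ((c • A) j i) ^ q = c ^ q * (A j i) ^ q
  rw [Matrix.smul_apply, smul_eq_mul, mul_pow]

lemma isUnit_ctrans {n : Type*} [DecidableEq n] [Fintype n] {P : Matrix n n F}
    (hP : IsUnit P) : IsUnit (ctrans q P) := by
  obtain ⟨B, hB1, hB2⟩ := isUnit_iff_exists.mp hP
  refine isUnit_iff_exists.mpr ⟨ctrans q B, ?_, ?_⟩
  · rw [← hG.ctrans_mul, hB2, hG.ctrans_one]
  · rw [← hG.ctrans_mul, hB1, hG.ctrans_one]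

lemma ctrans_inv {n : Type*} [DecidableEq n] [Fintype n] {X : Matrix n n F}
    (hX : IsUnit X) : ctrans q (X⁻¹) = (ctrans q X)⁻¹ := by
  symm
  apply Matrix.inv_eq_left_inv
  rw [← hG.ctrans_mul, Matrix.mul_nonsing_inv X ((Matrix.isUnit_iff_isUnit_det X).mp hX),
    hG.ctrans_one]

end Good


variable {ι : Type*} [Fintype ι]

/-- `conj x ⬝ᵥ v` -/
def bdot (q : ℕ) (x v : ι → F) : F := ∑ i, (x i) ^ q * v i

omit [Fintype ι] in
lemma herm_entry {S : Matrix ι ι F} (hS : IsHerm q S) (i j : ι) :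
    (S j i) ^ q = S i j := congrFun (congrFun hS i) j

lemma bdot_add_right (x y z : ι → F) : bdot q x (y + z) = bdot q x y + bdot q x z := by
  simp [bdot, mul_add, Finset.sum_add_distrib]

lemma bdot_smul_right (c : F) (x y : ι → F) : bdot q x (c • y) = c * bdot q x y := by
  simp only [bdot, Finset.mul_sum, Pi.smul_apply, smul_eq_mul]; exact Finset.sum_congr rfl (by intros; ring)

lemma Good.bdot_pow (hG : Good q F) (x v : ι → F) : (bdot q x v) ^ q = bdot q v x := by
  rw [bdot, hG.psum, bdot]
  exact Finset.sum_congr rfl fun i _ => by rw [mul_pow, hG.hiv, mul_comm]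

lemma Good.bdot_add_left (hG : Good q F) (x v z : ι → F) (t : F) :
    bdot q (x + t • v) z = bdot q x z + t ^ q * bdot q v z := by
  simp only [bdot, Pi.add_apply, Pi.smul_apply, smul_eq_mul, hG.hadd, mul_pow, Finset.mul_sum]
  rw [← Finset.sum_add_distrib]
  exact Finset.sum_congr rfl fun i _ => by ring

lemma bdot_mulVec_herm {S : Matrix ι ι F} (hG : Good q F) (hS : IsHerm q S) (w z : ι → F) :
    bdot q w (S *ᵥ z) = bdot q (S *ᵥ w) z := by
  simp only [bdot, Matrix.mulVec, dotProduct, hG.psum, mul_pow, hG.hiv, Finset.mul_sum,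
    Finset.sum_mul]
  rw [Finset.sum_comm]
  refine Finset.sum_congr rfl fun i _ => Finset.sum_congr rfl fun j _ => ?_
  rw [herm_entry hS j i]
  ring

def qf (q : ℕ) (S : Matrix ι ι F) (w : ι → F) : F := bdot q w (S *ᵥ w)

lemma Good.qf_fixed (hG : Good q F) {S : Matrix ι ι F} (hS : IsHerm q S) (w : ι → F) :
    (qf q S w) ^ q = qf q S w := by
  rw [qf, hG.bdot_pow, bdot_mulVec_herm hG hS]

lemma mulVec_smul_outerq (c : F) (x v : ι → F) :
    (c • outerq q x) *ᵥ v = (c * bdot q x v) • x := by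
  ext i
  simp only [Matrix.mulVec, dotProduct, Matrix.smul_apply, outerq, Matrix.of_apply,
    smul_eq_mul, Pi.smul_apply, bdot, Finset.mul_sum]
  rw [Finset.sum_mul]
  exact Finset.sum_congr rfl fun j _ => by ring

omit [Fintype ι] in
lemma Good.ctrans_outerq (hG : Good q F) (x : ι → F) :
    ctrans q (outerq q x) = outerq q x := by
  ext i j
  show (x j * (x i)^q)^q = x i * (x j)^q
  rw [mul_pow, hG.hiv, mul_comm]

lemma Good.qf_expand (hG : Good q F) {S : Matrix ι ι F} (hS : IsHerm q S) (u v : ι → F) (t : F) :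
    qf q S (u + t • v) =
      qf q S u + t * bdot q u (S *ᵥ v) + (t * bdot q u (S *ᵥ v)) ^ q
        + t ^ (q + 1) * qf q S v := by
  have hmv : S *ᵥ (u + t • v) = S *ᵥ u + t • (S *ᵥ v) := by
    rw [Matrix.mulVec_add, Matrix.mulVec_smul]
  rw [qf, hmv, hG.bdot_add_left, bdot_add_right, bdot_add_right, bdot_smul_right, bdot_smul_right,
    mul_pow]
  have hswap : bdot q v (S *ᵥ u) = (bdot q u (S *ᵥ v)) ^ q := by
    rw [hG.bdot_pow, bdot_mulVec_herm hG hS]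
  rw [hswap, qf, qf, pow_succ]
  ring


section Iso
variable {ι : Type*} [Fintype ι] [DecidableEq ι]

lemma qf_single (hG : Good q F) (S : Matrix ι ι F) (i : ι) :
    qf q S (Pi.single i 1) = S i i := by
  rw [qf, bdot]
  rw [Finset.sum_eq_single i]
  · simp [Matrix.mulVec_single, one_pow]
  · intro b _ hb
    rw [Pi.single_eq_of_ne hb, zero_pow hG.hq0, zero_mul]
  · intro h; exact absurd (Finset.mem_univ i) h

lemma bdot_single_mulVec_single (hG : Good q F) (S : Matrix ι ι F) (i j : ι) :
    bdot q (Pi.single i 1) (S *ᵥ Pi.single j 1) = S i j := by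
  rw [bdot, Finset.sum_eq_single i]
  · simp [Matrix.mulVec_single, one_pow]
  · intro b _ hb
    rw [Pi.single_eq_of_ne hb, zero_pow hG.hq0, zero_mul]
  · intro h; exact absurd (Finset.mem_univ i) h

lemma exists_qf_ne_zero (hG : Good q F) (htr : ∃ t : F, t + t ^ q ≠ 0)
    {S : Matrix ι ι F} (hS : IsHerm q S) (hS0 : S ≠ 0) : ∃ w, qf q S w ≠ 0 := by
  by_contra h
  push_neg at h
  obtain ⟨t₀, ht₀⟩ := htr
  have hij : ∃ i j, S i j ≠ 0 := by
    by_contra hc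
    push_neg at hc
    exact hS0 (by ext i j; exact hc i j)
  obtain ⟨i, j, hSij⟩ := hij
  have hexp := hG.qf_expand hS (Pi.single i 1) (Pi.single j 1) (t₀ * (S i j)⁻¹)
  rw [h _, h _, h _, bdot_single_mulVec_single hG] at hexp
  rw [mul_assoc, inv_mul_cancel₀ hSij, mul_one] at hexp
  apply ht₀
  linear_combination -hexp

lemma exists_trace_ne_zero (hG : Good q F) (hq3 : 3 ≤ q) [Fintype F]
    (hF : Fintype.card F = q ^ 2) : ∃ t : F, t + t ^ q ≠ 0 := by
  classical
  have hpne : (Polynomial.X + Polynomial.X ^ q : Polynomial F) ≠ 0 := by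
    intro hc
    have := congrArg (Polynomial.coeff · q) hc
    simp only [Polynomial.coeff_add, Polynomial.coeff_X, Polynomial.coeff_X_pow,
      Polynomial.coeff_zero] at this
    have hq1 : ¬ (1 = q) := by omega
    simp [hq1] at this
  have hdeg : (Polynomial.X + Polynomial.X ^ q : Polynomial F).natDegree < q ^ 2 := by
    have h1 : (Polynomial.X + Polynomial.X ^ q : Polynomial F).natDegree ≤ q := by
      refine le_trans (Polynomial.natDegree_add_le _ _) ?_
      simp [Polynomial.natDegree_X_pow, Polynomial.natDegree_X]
      omega
    nlinarith
  obtain ⟨t, ht⟩ := Polynomial.exists_eval_ne_zero_of_natDegree_lt_card _ hpne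
    (by rw [Cardinal.mk_fintype, hF]; exact_mod_cast hdeg)
  exact ⟨t, by simpa using ht⟩

lemma exists_qf_pair_ne_zero (hG : Good q F) (hq3 : 3 ≤ q) [Fintype F]
    (hF : Fintype.card F = q ^ 2) {S T : Matrix ι ι F} (hS : IsHerm q S) (hT : IsHerm q T)
    (hS0 : S ≠ 0) (hT0 : T ≠ 0) : ∃ w, qf q S w ≠ 0 ∧ qf q T w ≠ 0 := by
  classical
  have htr := exists_trace_ne_zero hG hq3 hF
  obtain ⟨u, hu⟩ := exists_qf_ne_zero hG htr hS hS0
  obtain ⟨v, hv⟩ := exists_qf_ne_zero hG htr hT hT0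
  by_cases hTu : qf q T u ≠ 0
  · exact ⟨u, hu, hTu⟩
  by_cases hSv : qf q S v ≠ 0
  · exact ⟨v, hSv, hv⟩
  push_neg at hTu hSv
  set B := bdot q u (S *ᵥ v) with hB
  set Cc := bdot q u (T *ᵥ v) with hCc
  set p₁ : Polynomial F := Polynomial.C (qf q S u) + Polynomial.C B * Polynomial.X
      + Polynomial.C (B ^ q) * Polynomial.X ^ q with hp₁def
  set p₂ : Polynomial F := Polynomial.C Cc * Polynomial.X
      + Polynomial.C (Cc ^ q) * Polynomial.X ^ q
      + Polynomial.C (qf q T v) * Polynomial.X ^ (q + 1) with hp₂def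
  have hp₁ : p₁ ≠ 0 := by
    intro hc
    have := congrArg (Polynomial.coeff · 0) hc
    simp only [hp₁def, Polynomial.coeff_add, Polynomial.coeff_C_mul, Polynomial.coeff_X_zero,
      Polynomial.coeff_X_pow, Polynomial.coeff_C_zero, Polynomial.coeff_zero, mul_zero,
      Polynomial.coeff_C] at this
    have h0q : ¬ (0 = q) := fun h => hG.hq0 h.symm
    simp only [h0q, if_false, add_zero] at this
    simp at this
    exact hu this
  have hp₂ : p₂ ≠ 0 := by
    intro hc
    have := congrArg (Polynomial.coeff · (q + 1)) hc
    have hq1 : ¬ (q + 1 = 1) := by omega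
    have hqq : ¬ (q = q + 1) := by omega
    simp only [hp₂def, Polynomial.coeff_add, Polynomial.coeff_C_mul, Polynomial.coeff_X,
      Polynomial.coeff_X_pow, Polynomial.coeff_zero, hq1, hqq, if_false, mul_zero, mul_one,
    if_true, eq_self_iff_true] at this
    simp [hG.hq0] at this
    exact hv this
  have hdeg : (p₁ * p₂).natDegree < q ^ 2 := by
    have h1 : p₁.natDegree ≤ q := by
      refine le_trans (Polynomial.natDegree_add_le _ _) ?_
      have : (Polynomial.C (qf q S u) + Polynomial.C B * Polynomial.X).natDegree ≤ 1 := by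
        refine le_trans (Polynomial.natDegree_add_le _ _) ?_
        simp [Polynomial.natDegree_C]
        exact le_trans (Polynomial.natDegree_C_mul_le _ _) (by simp)
      have h2 : (Polynomial.C (B ^ q) * Polynomial.X ^ q).natDegree ≤ q :=
        le_trans (Polynomial.natDegree_C_mul_le _ _) (by simp)
      refine max_le (le_trans this (by omega)) h2
    have h2 : p₂.natDegree ≤ q + 1 := by
      refine le_trans (Polynomial.natDegree_add_le _ _) ?_
      have ha : (Polynomial.C Cc * Polynomial.X).natDegree ≤ 1 :=
        le_trans (Polynomial.natDegree_C_mul_le _ _) (by simp)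
      have hb : (Polynomial.C (Cc ^ q) * Polynomial.X ^ q).natDegree ≤ q :=
        le_trans (Polynomial.natDegree_C_mul_le _ _) (by simp)
      have hc : (Polynomial.C (qf q T v) * Polynomial.X ^ (q + 1)).natDegree ≤ q + 1 :=
        le_trans (Polynomial.natDegree_C_mul_le _ _) (by simp)
      have hab : (Polynomial.C Cc * Polynomial.X
          + Polynomial.C (Cc ^ q) * Polynomial.X ^ q).natDegree ≤ q :=
        le_trans (Polynomial.natDegree_add_le _ _) (max_le (le_trans ha (by omega)) hb)
      refine max_le (le_trans hab (by omega)) hc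
    have := Polynomial.natDegree_mul_le (p := p₁) (q := p₂)
    nlinarith
  obtain ⟨t, ht⟩ := Polynomial.exists_eval_ne_zero_of_natDegree_lt_card _
    (mul_ne_zero hp₁ hp₂) (by rw [Cardinal.mk_fintype, hF]; exact_mod_cast hdeg)
  rw [Polynomial.eval_mul, mul_ne_zero_iff] at ht
  refine ⟨u + t • v, ?_, ?_⟩
  · have he := hG.qf_expand hS u v t
    rw [hSv, mul_zero, add_zero, ← hB] at he
    rw [he]
    have : Polynomial.eval t p₁ = qf q S u + t * B + (t * B) ^ q := by
      simp [hp₁def, mul_pow]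
      ring
    rw [← this]; exact ht.1
  · have he := hG.qf_expand hT u v t
    rw [hTu, ← hCc] at he
    rw [he]
    have : Polynomial.eval t p₂ = 0 + t * Cc + (t * Cc) ^ q + t ^ (q + 1) * qf q T v := by
      simp [hp₂def, mul_pow]
      ring
    rw [← this]; exact ht.2

end Iso

section LinAlg
open Module Submodule LinearMap

variable {n₁ n₂ k₁ k₂ : Type*} [Fintype n₁] [Fintype n₂] [Fintype k₁] [Fintype k₂]

lemma ext_of_mulVec [DecidableEq k₁] {M N : Matrix n₁ k₁ F}
    (h : ∀ v, M *ᵥ v = N *ᵥ v) : M = N := by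
  ext i j
  have := congrFun (h (Pi.single j 1)) i
  simpa [Matrix.mulVec_single] using this

lemma factor_right [DecidableEq k₂] {A : Matrix n₁ k₁ F} {B : Matrix n₁ k₂ F}
    (h : LinearMap.range B.mulVecLin ≤ LinearMap.range A.mulVecLin) :
    ∃ N : Matrix k₁ k₂ F, B = A * N := by
  have hc : ∀ j, ∃ v, A *ᵥ v = B *ᵥ Pi.single j 1 := by
    intro j
    exact h (LinearMap.mem_range.mpr ⟨Pi.single j 1, rfl⟩)
  refine ⟨Matrix.of fun i j => Classical.choose (hc j) i, ?_⟩
  ext i j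
  rw [Matrix.mul_apply]
  have hj := congrFun (Classical.choose_spec (hc j)) i
  simp only [Matrix.mulVec, dotProduct] at hj
  simp only [Matrix.of_apply]
  rw [hj]
  simp [Pi.single_apply]

lemma mem_range_transpose_iff {M : Matrix n₁ k₁ F} (u : k₁ → F) :
    u ∈ LinearMap.range (Mᵀ.mulVecLin) ↔ ∀ v, M *ᵥ v = 0 → u ⬝ᵥ v = 0 := by
  classical
  constructor
  · rintro ⟨w, rfl⟩ v hv
    show (Mᵀ *ᵥ w) ⬝ᵥ v = 0
    rw [Matrix.mulVec_transpose, ← dotProduct_mulVec, hv, dotProduct_zero]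
  · intro hu
    by_contra hnot
    obtain ⟨f, hfu, hbot⟩ := Submodule.exists_dual_map_eq_bot_of_notMem hnot inferInstance
    set z : k₁ → F := fun i => f (Pi.single i 1) with hz
    have hfy : ∀ y : k₁ → F, f y = y ⬝ᵥ z := by
      intro y
      have hy : y = ∑ i, y i • (Pi.single i 1 : k₁ → F) := by
        ext j
        rw [Finset.sum_apply]
        simp [Pi.single_apply]
      rw [hy, map_sum]
      simp only [_root_.map_smul, smul_eq_mul]
      rw [dotProduct]
      refine Finset.sum_congr rfl fun i _ => ?_
      simp [hz, Pi.single_apply, Finset.sum_ite_eq]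
    have hMz : M *ᵥ z = 0 := by
      ext i
      have hrow : (fun j => M i j) = Mᵀ *ᵥ Pi.single i 1 := by
        ext j; simp [Matrix.mulVec_single, Matrix.transpose_apply]
      have hmem : (fun j => M i j) ∈ LinearMap.range (Mᵀ.mulVecLin) := ⟨Pi.single i 1, hrow.symm⟩
      have : f (fun j => M i j) = 0 := by
        have := hbot ▸ Submodule.mem_map_of_mem (p := LinearMap.range (Mᵀ.mulVecLin)) hmem
        exact (Submodule.mem_bot F).mp this
      rw [hfy] at this
      simpa [Matrix.mulVec, dotProduct] using this
    have := hu z hMz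
    rw [← hfy] at this
    exact hfu this

/-- entrywise `q`-power -/
def mconj (q : ℕ) {m n : Type*} (M : Matrix m n F) : Matrix m n F := M.map (· ^ q)

omit [Fintype n₁] [Fintype k₁] in
lemma ctrans_eq_transpose_mconj (M : Matrix n₁ k₁ F) : ctrans q M = (mconj q M)ᵀ := rfl

lemma mconj_mulVec (hG : Good q F) (M : Matrix n₁ k₁ F) (v : k₁ → F) :
    (mconj q M) *ᵥ v = fun i => ((M *ᵥ fun j => (v j) ^ q) i) ^ q := by
  ext i
  simp only [Matrix.mulVec, dotProduct, mconj, Matrix.map_apply, hG.psum, mul_pow]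
  exact Finset.sum_congr rfl fun j _ => by rw [hG.hiv]

lemma cvec_eq_zero_iff (hG : Good q F) {v : k₁ → F} :
    (fun j => (v j) ^ q) = (0 : k₁ → F) ↔ v = 0 := by
  constructor
  · intro h; ext j
    have := congrFun h j
    exact pow_eq_zero_iff hG.hq0 |>.mp this
  · intro h; subst h; ext j; simp [zero_pow hG.hq0]

lemma surjective_ctrans_mulVecLin (hG : Good q F) {C : Matrix n₁ k₁ F}
    (hC : Function.Injective C.mulVecLin) :
    Function.Surjective (ctrans q C).mulVecLin := by
  rw [← LinearMap.range_eq_top]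
  refine Submodule.eq_top_iff'.mpr fun u => ?_
  rw [ctrans_eq_transpose_mconj, mem_range_transpose_iff]
  intro v hv
  rw [mconj_mulVec hG] at hv
  have h1 : C *ᵥ (fun j => (v j) ^ q) = 0 := by
    have := (cvec_eq_zero_iff hG (v := C *ᵥ fun j => (v j) ^ q)).mp ?_
    · exact this
    · ext i; exact congrFun hv i
  have h2 : (fun j => (v j) ^ q) = (0 : k₁ → F) := by
    have h0 : C.mulVecLin (fun j => (v j) ^ q) = C.mulVecLin 0 := by
      simpa [Matrix.mulVecLin_apply] using h1
    exact hC h0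
  have h3 : v = 0 := (cvec_eq_zero_iff hG).mp h2
  subst h3
  simp

lemma herm_range_le_of_ker {A B : Matrix k₁ k₁ F} (hG : Good q F)
    (hA : IsHerm q A) (hB : IsHerm q B) (hk : ∀ v, A *ᵥ v = 0 → B *ᵥ v = 0) :
    LinearMap.range B.mulVecLin ≤ LinearMap.range A.mulVecLin := by
  intro u hu
  have hBr : LinearMap.range B.mulVecLin = LinearMap.range ((mconj q B)ᵀ.mulVecLin) := by
    rw [← ctrans_eq_transpose_mconj, hB]
  have hAr : LinearMap.range A.mulVecLin = LinearMap.range ((mconj q A)ᵀ.mulVecLin) := by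
    rw [← ctrans_eq_transpose_mconj, hA]
  rw [hBr] at hu
  rw [hAr, mem_range_transpose_iff]
  rw [mem_range_transpose_iff] at hu
  intro v hv
  refine hu v ?_
  rw [mconj_mulVec hG] at hv ⊢
  have h1 : A *ᵥ (fun j => (v j) ^ q) = 0 :=
    (cvec_eq_zero_iff hG (v := A *ᵥ fun j => (v j) ^ q)).mp (by ext i; exact congrFun hv i)
  have h2 := hk _ h1
  rw [h2]
  ext i; simp [zero_pow hG.hq0]

lemma eq_zero_of_rank_eq_zero {A : Matrix n₁ k₁ F} [DecidableEq k₁] (h : A.rank = 0) :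
    A = 0 := by
  have hr : LinearMap.range A.mulVecLin = ⊥ := Submodule.finrank_eq_zero.mp h
  refine ext_of_mulVec fun v => ?_
  have : A.mulVecLin v ∈ LinearMap.range A.mulVecLin := ⟨v, rfl⟩
  rw [hr] at this
  simpa [Matrix.mulVecLin_apply] using this

lemma rank_mul_mul {C : Matrix n₁ k₁ F} {M : Matrix k₁ k₂ F} {D : Matrix k₂ n₂ F}
    (hC : Function.Injective C.mulVecLin) (hD : Function.Surjective D.mulVecLin) :
    (C * M * D).rank = M.rank := by
  have h1 : (C * M * D).mulVecLin = C.mulVecLin ∘ₗ (M.mulVecLin ∘ₗ D.mulVecLin) := by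
    rw [Matrix.mulVecLin_mul, Matrix.mulVecLin_mul, LinearMap.comp_assoc]
  rw [Matrix.rank, Matrix.rank, h1]
  rw [LinearMap.range_comp, LinearMap.range_comp, LinearMap.range_eq_top.mpr hD,
    Submodule.map_top]
  exact (LinearEquiv.finrank_eq
    (Submodule.equivMapOfInjective C.mulVecLin hC (LinearMap.range M.mulVecLin))).symm

end LinAlg

section RankOne
open Module Submodule LinearMap
variable {ι : Type*} [Fintype ι] [DecidableEq ι]

lemma bdot_sub_right (x y z : ι → F) : bdot q x (y - z) = bdot q x y - bdot q x z := by
  simp [bdot, mul_sub, Finset.sum_sub_distrib]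

lemma bdot_single (x : ι → F) (j : ι) :
    bdot q x (Pi.single j 1) = (x j) ^ q := by
  rw [bdot, Finset.sum_eq_single j]
  · simp
  · intro b _ hb; simp [Pi.single_eq_of_ne hb]
  · intro h; exact absurd (Finset.mem_univ j) h

lemma range_smul_outer (hG : Good q F) {x : ι → F} (hx : x ≠ 0) {c : F} (hc : c ≠ 0) :
    LinearMap.range (c • outerq q x).mulVecLin = Submodule.span F {x} := by
  apply le_antisymm
  · rintro u ⟨v, rfl⟩
    rw [Matrix.mulVecLin_apply, mulVec_smul_outerq]
    exact Submodule.smul_mem _ _ (Submodule.mem_span_singleton_self x)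
  · rw [Submodule.span_le, Set.singleton_subset_iff]
    obtain ⟨j, hj⟩ : ∃ j, x j ≠ 0 := by
      by_contra hcon; push_neg at hcon; exact hx (by ext j; exact hcon j)
    have hb : bdot q x (Pi.single j 1) = (x j) ^ q := bdot_single x j
    have hne : c * bdot q x (Pi.single j 1) ≠ 0 := by
      rw [hb]; exact mul_ne_zero hc (pow_ne_zero _ hj)
    have hmem : (c * bdot q x (Pi.single j 1)) • x ∈ LinearMap.range (c • outerq q x).mulVecLin :=
      ⟨Pi.single j 1, by rw [Matrix.mulVecLin_apply, mulVec_smul_outerq]⟩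
    have := Submodule.smul_mem _ (c * bdot q x (Pi.single j 1))⁻¹ hmem
    rwa [inv_smul_smul₀ hne] at this

lemma rank_smul_outer (hG : Good q F) {x : ι → F} (hx : x ≠ 0) {c : F} (hc : c ≠ 0) :
    (c • outerq q x).rank = 1 := by
  rw [Matrix.rank, range_smul_outer hG hx hc]
  exact finrank_span_singleton hx

/-- the linear functional `v ↦ bdot q x v` -/
def bdotl (q : ℕ) (x : ι → F) : (ι → F) →ₗ[F] F where
  toFun v := bdot q x v
  map_add' y z := bdot_add_right x y z
  map_smul' c y := by simp [bdot_smul_right]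

lemma rank_sub_outer (hG : Good q F) {S : Matrix ι ι F} (hS : IsHerm q S) {w : ι → F}
    (hc : qf q S w ≠ 0) :
    (S - (qf q S w)⁻¹ • outerq q (S *ᵥ w)).rank + 1 = S.rank := by
  set c := qf q S w with hcdef
  set x := S *ᵥ w with hxdef
  set S' := S - c⁻¹ • outerq q x with hS'def
  have hbxw : bdot q x w = c := by
    have h1 : (bdot q w x) ^ q = bdot q x w := hG.bdot_pow w x
    have h2 : bdot q w x = c := rfl
    rw [← h1, h2, hcdef, hG.qf_fixed hS]
  have hxne : x ≠ 0 := by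
    intro h0
    apply hc
    show bdot q w (S *ᵥ w) = 0
    rw [← hxdef, h0]
    simp [bdot]
  set τ : (ι → F) →ₗ[F] (ι → F) := LinearMap.id - (c⁻¹ • bdotl q x).smulRight w with hτdef
  have hτ : ∀ v, τ v = v - (c⁻¹ * bdot q x v) • w := by
    intro v
    simp [hτdef, bdotl, smul_smul]
  have hcomp : S'.mulVecLin = S.mulVecLin ∘ₗ τ := by
    apply LinearMap.ext
    intro v
    simp only [Matrix.mulVecLin_apply, LinearMap.comp_apply, hτ]
    rw [hS'def, Matrix.sub_mulVec, mulVec_smul_outerq, Matrix.mulVec_sub, Matrix.mulVec_smul,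
      ← hxdef]
  set H := LinearMap.ker (bdotl q x) with hHdef
  have hrange : LinearMap.range τ = H := by
    apply le_antisymm
    · rintro u ⟨v, rfl⟩
      rw [LinearMap.mem_ker]
      show bdot q x (τ v) = 0
      rw [hτ v, bdot_sub_right, bdot_smul_right, hbxw]
      field_simp
      ring
    · intro v hv
      have hv0 : bdot q x v = 0 := hv
      refine ⟨v, ?_⟩
      rw [hτ v, hv0]
      simp
  have htop : (⊤ : Submodule F (ι → F)) = H ⊔ Submodule.span F {w} := by
    apply le_antisymm
    · intro v _
      refine Submodule.mem_sup.mpr ⟨τ v, ?_, (c⁻¹ * bdot q x v) • w,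
        Submodule.smul_mem _ _ (Submodule.mem_span_singleton_self w), ?_⟩
      · rw [← hrange]; exact ⟨v, rfl⟩
      · rw [hτ v]; abel
    · exact le_top
  have hrS' : LinearMap.range S'.mulVecLin = Submodule.map S.mulVecLin H := by
    rw [hcomp, LinearMap.range_comp, hrange]
  have hxnot : x ∉ LinearMap.range S'.mulVecLin := by
    rw [hrS']
    rintro ⟨u, hu, hux⟩
    have hu0 : bdot q x u = 0 := hu
    have h1 : bdot q w (S *ᵥ u) = bdot q x u := by rw [bdot_mulVec_herm hG hS, ← hxdef]
    have hx2 : S *ᵥ u = x := hux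
    rw [hx2, hu0] at h1
    exact hc h1
  have hrS : LinearMap.range S.mulVecLin
      = LinearMap.range S'.mulVecLin ⊔ Submodule.span F {x} := by
    have h0 : LinearMap.range S.mulVecLin = Submodule.map S.mulVecLin ⊤ :=
      (Submodule.map_top _).symm
    rw [h0, htop, Submodule.map_sup, ← hrS', Submodule.map_span, Set.image_singleton]
    have : S.mulVecLin w = x := rfl
    rw [this]
  have hdisj : LinearMap.range S'.mulVecLin ⊓ Submodule.span F {x} = ⊥ := by
    rw [Submodule.eq_bot_iff]
    rintro y ⟨hy1, hy2⟩
    obtain ⟨a, rfl⟩ := Submodule.mem_span_singleton.mp hy2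
    by_cases ha : a = 0
    · simp [ha]
    · exfalso
      apply hxnot
      have := Submodule.smul_mem _ a⁻¹ hy1
      rwa [inv_smul_smul₀ ha] at this
  have hfin := Submodule.finrank_sup_add_finrank_inf_eq
    (LinearMap.range S'.mulVecLin) (Submodule.span F {x})
  rw [hdisj, finrank_bot, finrank_span_singleton hxne] at hfin
  rw [Matrix.rank, Matrix.rank, hrS]
  omega

end RankOne


section Conn
open Module Submodule LinearMap
variable {ι : Type*} [Fintype ι] [DecidableEq ι]

lemma exists_step (hG : Good q F) (hq3 : 3 ≤ q) [Fintype F] (hF : Fintype.card F = q ^ 2)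
    {X Y : Matrix ι ι F} (hX : IsHerm q X) (hY : IsHerm q Y) (hXu : IsUnit X) (hYu : IsUnit Y)
    (hne : X ≠ Y) :
    ∃ Z, IsHerm q Z ∧ IsUnit Z ∧ (X - Z).rank = 1 ∧ (Z - Y).rank + 1 = (X - Y).rank := by
  set S := X - Y with hSdef
  have hSh : IsHerm q S := by rw [IsHerm, hG.ctrans_sub, hX, hY]
  have hS0 : S ≠ 0 := sub_ne_zero.mpr hne
  have hdet : IsUnit X.det := (Matrix.isUnit_iff_isUnit_det X).mp hXu
  have hdetY : IsUnit Y.det := (Matrix.isUnit_iff_isUnit_det Y).mp hYu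
  set T := S - S * X⁻¹ * S with hTdef
  have hTh : IsHerm q T := by
    have h1 : ctrans q (S * X⁻¹ * S) = S * X⁻¹ * S := by
      rw [hG.ctrans_mul, hG.ctrans_mul, hSh, hG.ctrans_inv hXu, hX, Matrix.mul_assoc]
    rw [IsHerm, hG.ctrans_sub, hSh, h1]
  have hTY : T = S * X⁻¹ * Y := by
    have h2 : S * X⁻¹ * Y = S * X⁻¹ * X - S * X⁻¹ * S := by
      rw [← Matrix.mul_sub, hSdef, sub_sub_cancel]
    rw [h2, Matrix.mul_assoc, Matrix.nonsing_inv_mul X hdet, Matrix.mul_one, hTdef]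
  have hT0 : T ≠ 0 := by
    intro h0
    have hS : S = T * (Y⁻¹ * X) := by
      rw [hTY, Matrix.mul_assoc, ← Matrix.mul_assoc Y Y⁻¹ X,
        Matrix.mul_nonsing_inv Y hdetY, Matrix.one_mul, Matrix.mul_assoc,
        Matrix.nonsing_inv_mul X hdet, Matrix.mul_one]
    rw [h0, Matrix.zero_mul] at hS
    exact hS0 hS
  obtain ⟨w, hwS, hwT⟩ := exists_qf_pair_ne_zero hG hq3 hF hSh hTh hS0 hT0
  set c := qf q S w with hcdef
  set x := S *ᵥ w with hxdef
  have hcne : c ≠ 0 := hwS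
  have hxne : x ≠ 0 := by
    intro h0
    apply hwS
    show bdot q w (S *ᵥ w) = 0
    rw [← hxdef, h0]
    simp [bdot]
  have hcq : c ^ q = c := hG.qf_fixed hSh w
  have hcg : qf q T w = c - bdot q x (X⁻¹ *ᵥ x) := by
    have h1 : T *ᵥ w = S *ᵥ w - S *ᵥ (X⁻¹ *ᵥ (S *ᵥ w)) := by
      rw [hTdef, Matrix.sub_mulVec, Matrix.mulVec_mulVec, Matrix.mulVec_mulVec]
    rw [qf, h1, bdot_sub_right, bdot_mulVec_herm hG hSh w (X⁻¹ *ᵥ x)]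
    rfl
  refine ⟨X - c⁻¹ • outerq q x, ?_, ?_, ?_, ?_⟩
  · have h1 : ctrans q (c⁻¹ • outerq q x) = c⁻¹ • outerq q x := by
      rw [Good.ctrans_smul, hG.ctrans_outerq, inv_pow, hcq]
    rw [IsHerm, hG.ctrans_sub, hX, h1]
  · -- invertibility
    rw [← Matrix.mulVec_injective_iff_isUnit]
    intro u v huv
    have hker : ∀ v, (X - c⁻¹ • outerq q x) *ᵥ v = 0 → v = 0 := by
      intro v hv
      rw [Matrix.sub_mulVec, sub_eq_zero, mulVec_smul_outerq] at hv
      have hv2 : v = (c⁻¹ * bdot q x v) • (X⁻¹ *ᵥ x) := by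
        have h9 : X⁻¹ *ᵥ (X *ᵥ v) = X⁻¹ *ᵥ ((c⁻¹ * bdot q x v) • x) := by rw [hv]
        rw [Matrix.mulVec_mulVec, Matrix.nonsing_inv_mul X hdet, Matrix.one_mulVec,
          Matrix.mulVec_smul] at h9
        exact h9
      by_cases hb : bdot q x v = 0
      · rw [hv2, hb, mul_zero, zero_smul]
      · exfalso
        have h3 : bdot q x v = c⁻¹ * bdot q x v * bdot q x (X⁻¹ *ᵥ x) := by
          conv_lhs => rw [hv2, bdot_smul_right]
        have h6 : c * bdot q x v = c * (c⁻¹ * bdot q x v * bdot q x (X⁻¹ *ᵥ x)) := by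
          rw [← h3]
        rw [← mul_assoc, ← mul_assoc, mul_inv_cancel₀ hcne, one_mul] at h6
        have h7 : bdot q x v * bdot q x (X⁻¹ *ᵥ x) = bdot q x v * c := by linear_combination -h6
        have h5 : bdot q x (X⁻¹ *ᵥ x) = c := mul_left_cancel₀ hb h7
        apply hwT
        rw [hcg, h5, sub_self]
    have h0 : (X - c⁻¹ • outerq q x) *ᵥ (u - v) = 0 := by
      rw [Matrix.mulVec_sub, huv, sub_self]
    exact sub_eq_zero.mp (hker _ h0)
  · rw [sub_sub_cancel]
    exact rank_smul_outer hG hxne (inv_ne_zero hcne)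
  · rw [sub_right_comm, ← hSdef]
    exact rank_sub_outer hG hSh hwS

end Conn

section Chain
variable {ι : Type*} [Fintype ι] [DecidableEq ι]

lemma herm_chain_aux (hG : Good q F) (hq3 : 3 ≤ q) [Fintype F] (hF : Fintype.card F = q ^ 2) :
    ∀ (d : ℕ) (X Y : Matrix ι ι F), IsHerm q X → IsHerm q Y → IsUnit X → IsUnit Y →
      (X - Y).rank = d →
      Relation.ReflTransGen (fun A B : Matrix ι ι F =>
        IsHerm q B ∧ IsUnit B ∧ (A - B).rank = 1) X Y := by
  intro d
  induction d with
  | zero =>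
    intro X Y hX hY hXu hYu hd
    have hXY : X = Y := sub_eq_zero.mp (eq_zero_of_rank_eq_zero hd)
    exact hXY ▸ Relation.ReflTransGen.refl
  | succ n ih =>
    intro X Y hX hY hXu hYu hd
    have hne : X ≠ Y := by
      intro h
      rw [h, sub_self] at hd
      simp at hd
    obtain ⟨Z, hZh, hZu, h1, h2⟩ := exists_step hG hq3 hF hX hY hXu hYu hne
    have h3 : (Z - Y).rank = n := by omega
    exact Relation.ReflTransGen.head ⟨hZh, hZu, h1⟩ (ih Z Y hZh hY hZu hYu h3)

end Chain

section Decomp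
open Module
variable {n k : Type*} [Fintype n] [Fintype k] [DecidableEq n] [DecidableEq k]

lemma finrank_range_of_injective {C : Matrix n k F} (hC : Function.Injective C.mulVecLin) :
    finrank F (LinearMap.range C.mulVecLin) = Fintype.card k := by
  rw [← LinearEquiv.finrank_eq (LinearEquiv.ofInjective C.mulVecLin hC)]
  rw [Module.finrank_pi]

lemma isUnit_of_rank_eq_card {X : Matrix k k F} (h : X.rank = Fintype.card k) : IsUnit X := by
  rw [← Matrix.mulVec_surjective_iff_isUnit]
  have htop : LinearMap.range X.mulVecLin = ⊤ := by
    apply Submodule.eq_top_of_finrank_eq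
    rw [show finrank F (LinearMap.range X.mulVecLin) = X.rank from rfl, h, Module.finrank_pi]
  have hs : Function.Surjective X.mulVecLin := LinearMap.range_eq_top.mp htop
  intro y
  obtain ⟨v, hv⟩ := hs y
  exact ⟨v, by simpa [Matrix.mulVecLin_apply] using hv⟩

lemma herm_CXC (hG : Good q F) (C : Matrix n k F) {X : Matrix k k F} (hX : IsHerm q X) :
    IsHerm q (C * X * ctrans q C) := by
  rw [IsHerm, hG.ctrans_mul, hG.ctrans_mul, hG.ctrans_ctrans, hX, Matrix.mul_assoc]

lemma herm_decomp (hG : Good q F) {A : Matrix n n F} {C : Matrix n k F}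
    (hA : IsHerm q A) (hC : Function.Injective C.mulVecLin)
    (hr : LinearMap.range A.mulVecLin = LinearMap.range C.mulVecLin) :
    ∃ X : Matrix k k F, IsHerm q X ∧ IsUnit X ∧ A = C * X * ctrans q C := by
  obtain ⟨N, hN⟩ := factor_right (le_of_eq hr)
  have hA2 : A = ctrans q N * ctrans q C := by
    conv_lhs => rw [← hA, hN, hG.ctrans_mul]
  set D := ctrans q N with hD
  have hrangeA_le : LinearMap.range A.mulVecLin ≤ LinearMap.range D.mulVecLin := by
    rw [hA2, Matrix.mulVecLin_mul, LinearMap.range_comp]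
    exact LinearMap.map_le_range
  have hfinD : finrank F (LinearMap.range D.mulVecLin) ≤ Fintype.card k := by
    have h9 := D.mulVecLin.finrank_range_le
    simpa [Module.finrank_pi] using h9
  have hle : LinearMap.range C.mulVecLin ≤ LinearMap.range D.mulVecLin := hr ▸ hrangeA_le
  have hEq : LinearMap.range D.mulVecLin = LinearMap.range C.mulVecLin :=
    (Submodule.eq_of_le_of_finrank_le hle
      (by rw [finrank_range_of_injective hC]; exact hfinD)).symm
  obtain ⟨X, hX⟩ := factor_right (le_of_eq hEq)
  have hAX : A = C * X * ctrans q C := by rw [hA2, hX, Matrix.mul_assoc]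
  have hsur : Function.Surjective (ctrans q C).mulVecLin := surjective_ctrans_mulVecLin hG hC
  have hcancel : ∀ M M' : Matrix k k F, C * M * ctrans q C = C * M' * ctrans q C → M = M' := by
    intro M M' hMM
    have h1 : C * M = C * M' := by
      apply ext_of_mulVec
      intro v
      obtain ⟨u, hu⟩ := hsur v
      have hu' : ctrans q C *ᵥ u = v := hu
      have e : (C * M * ctrans q C) *ᵥ u = (C * M' * ctrans q C) *ᵥ u := by rw [hMM]
      have e1 : (C * M * ctrans q C) *ᵥ u = (C * M) *ᵥ v := by
        rw [← hu', Matrix.mulVec_mulVec]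
      have e2 : (C * M' * ctrans q C) *ᵥ u = (C * M') *ᵥ v := by
        rw [← hu', Matrix.mulVec_mulVec]
      rw [e1, e2] at e
      exact e
    apply ext_of_mulVec
    intro v
    apply hC
    show C *ᵥ (M *ᵥ v) = C *ᵥ (M' *ᵥ v)
    rw [Matrix.mulVec_mulVec, Matrix.mulVec_mulVec, h1]
  have hXh : IsHerm q X := by
    apply hcancel
    have hctA : ctrans q (C * X * ctrans q C) = C * ctrans q X * ctrans q C := by
      rw [hG.ctrans_mul, hG.ctrans_mul, hG.ctrans_ctrans, Matrix.mul_assoc]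
    rw [← hctA, ← hAX, hA, hAX]
  have hXu : IsUnit X := by
    apply isUnit_of_rank_eq_card
    have h5 : A.rank = X.rank := by rw [hAX]; exact rank_mul_mul hC hsur
    rw [← h5, show A.rank = finrank F (LinearMap.range A.mulVecLin) from rfl, hr,
      finrank_range_of_injective hC]
  exact ⟨X, hXh, hXu, hAX⟩

lemma range_CXC (hG : Good q F) {C : Matrix n k F} (hC : Function.Injective C.mulVecLin)
    {X : Matrix k k F} (hXu : IsUnit X) :
    LinearMap.range (C * X * ctrans q C).mulVecLin = LinearMap.range C.mulVecLin := by
  have hsur : Function.Surjective (ctrans q C).mulVecLin := surjective_ctrans_mulVecLin hG hC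
  have hXsur : Function.Surjective X.mulVecLin := by
    have := Matrix.mulVec_surjective_iff_isUnit.mpr hXu
    intro y
    obtain ⟨v, hv⟩ := this y
    exact ⟨v, hv⟩
  have h1 : (C * X * ctrans q C).mulVecLin
      = (C * X).mulVecLin ∘ₗ (ctrans q C).mulVecLin := Matrix.mulVecLin_mul _ _
  rw [h1, LinearMap.range_comp, LinearMap.range_eq_top.mpr hsur, Submodule.map_top,
    Matrix.mulVecLin_mul, LinearMap.range_comp, LinearMap.range_eq_top.mpr hXsur,
    Submodule.map_top]

lemma rank_CXC (hG : Good q F) {C : Matrix n k F} (hC : Function.Injective C.mulVecLin)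
    (X : Matrix k k F) : (C * X * ctrans q C).rank = X.rank :=
  rank_mul_mul hC (surjective_ctrans_mulVecLin hG hC)

lemma range_eq_of_step (hG : Good q F) (htr : ∃ t : F, t + t ^ q ≠ 0)
    {A B : Matrix n n F} (hA : IsHerm q A) (hB : IsHerm q B) (hrk : A.rank = B.rank)
    (h1 : (A - B).rank = 1) :
    LinearMap.range A.mulVecLin = LinearMap.range B.mulVecLin := by
  set M := A - B with hM
  have hMh : IsHerm q M := by rw [IsHerm, hM, hG.ctrans_sub, hA, hB]
  have hM0 : M ≠ 0 := by
    intro h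
    rw [h] at h1
    simp at h1
  obtain ⟨w, hw⟩ := exists_qf_ne_zero hG htr hMh hM0
  have hr0 : (M - (qf q M w)⁻¹ • outerq q (M *ᵥ w)).rank + 1 = M.rank := rank_sub_outer hG hMh hw
  rw [h1] at hr0
  have hMeq : M = (qf q M w)⁻¹ • outerq q (M *ᵥ w) :=
    sub_eq_zero.mp (eq_zero_of_rank_eq_zero (by omega))
  set c := (qf q M w)⁻¹ with hc
  set x := M *ᵥ w with hx
  have hcne : c ≠ 0 := inv_ne_zero hw
  have hAB : ∀ v, A *ᵥ v = B *ᵥ v + (c * bdot q x v) • x := by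
    intro v
    have hBA : A = B + c • outerq q x := by
      rw [← hMeq, hM]
      abel
    rw [hBA, Matrix.add_mulVec, mulVec_smul_outerq]
  have hfr : finrank F (LinearMap.range A.mulVecLin)
      = finrank F (LinearMap.range B.mulVecLin) := hrk
  by_cases ha : ∀ v, A *ᵥ v = 0 → bdot q x v = 0
  · have hk : ∀ v, A *ᵥ v = 0 → B *ᵥ v = 0 := by
      intro v hv
      have h2 := hAB v
      rw [hv, ha v hv, mul_zero, zero_smul, add_zero] at h2
      exact h2.symm
    have hle := herm_range_le_of_ker hG hA hB hk
    exact (Submodule.eq_of_le_of_finrank_le hle (le_of_eq hfr)).symm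
  · push_neg at ha
    obtain ⟨v, hv0, hbv⟩ := ha
    have hxB : x ∈ LinearMap.range B.mulVecLin := by
      have h2 := hAB v
      rw [hv0] at h2
      have h3 : B *ᵥ v = (-(c * bdot q x v)) • x := by
        rw [neg_smul]
        exact eq_neg_of_add_eq_zero_left h2.symm
      have hne2 : -(c * bdot q x v) ≠ 0 := neg_ne_zero.mpr (mul_ne_zero hcne hbv)
      refine ⟨(-(c * bdot q x v))⁻¹ • v, ?_⟩
      rw [Matrix.mulVecLin_apply, Matrix.mulVec_smul, h3, smul_smul, inv_mul_cancel₀ hne2,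
        one_smul]
    have hle : LinearMap.range A.mulVecLin ≤ LinearMap.range B.mulVecLin := by
      rintro u ⟨z, rfl⟩
      rw [Matrix.mulVecLin_apply, hAB z]
      exact Submodule.add_mem _ ⟨z, rfl⟩ (Submodule.smul_mem _ _ hxB)
    exact Submodule.eq_of_le_of_finrank_le hle (le_of_eq hfr.symm)

end Decomp

section Graph
open Module
variable {ι κ : Type*} [Fintype ι] [DecidableEq ι] [Fintype κ] [DecidableEq κ]

lemma vert_spec (hG : Good q F) {C : Matrix ι κ F} (hC : Function.Injective C.mulVecLin)
    {r : ℕ} (hcard : Fintype.card κ = r)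
    {X : Matrix κ κ F} (hXh : IsHerm q X) (hXu : IsUnit X) :
    IsHerm q (C * X * ctrans q C) ∧ (C * X * ctrans q C).rank = r :=
  ⟨herm_CXC hG C hXh, by rw [rank_CXC hG hC, Matrix.rank_of_isUnit X hXu, hcard]⟩

lemma reachable_of_decomp (hG : Good q F) (hq3 : 3 ≤ q) [Fintype F]
    (hF : Fintype.card F = q ^ 2) {C : Matrix ι κ F} (hC : Function.Injective C.mulVecLin)
    {r : ℕ} (hcard : Fintype.card κ = r)
    {X Y : Matrix κ κ F} (hXh : IsHerm q X) (hXu : IsUnit X) (hYh : IsHerm q Y) (hYu : IsUnit Y) :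
    (rkGraph q (F := F) ι r).Reachable
      ⟨C * X * ctrans q C, vert_spec hG hC hcard hXh hXu⟩
      ⟨C * Y * ctrans q C, vert_spec hG hC hcard hYh hYu⟩ := by
  have hchain := herm_chain_aux hG hq3 hF ((X - Y).rank) X Y hXh hYh hXu hYu rfl
  have haux : ∀ (Z : Matrix κ κ F),
      Relation.ReflTransGen (fun A B : Matrix κ κ F =>
        IsHerm q B ∧ IsUnit B ∧ (A - B).rank = 1) Z Y →
      ∀ (hZh : IsHerm q Z) (hZu : IsUnit Z),
        (rkGraph q (F := F) ι r).Reachable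
          ⟨C * Z * ctrans q C, vert_spec hG hC hcard hZh hZu⟩
          ⟨C * Y * ctrans q C, vert_spec hG hC hcard hYh hYu⟩ := by
    intro Z hchainZ
    induction hchainZ using Relation.ReflTransGen.head_induction_on with
    | refl => intro hZh hZu; exact SimpleGraph.Reachable.refl _
    | head h' hch ih =>
      rename_i a c
      intro hah hau
      have hdiff : C * (a - c) * ctrans q C
          = C * a * ctrans q C - C * c * ctrans q C := by
        rw [Matrix.mul_sub, Matrix.sub_mul]
      have hr1 : (C * a * ctrans q C - C * c * ctrans q C).rank = 1 := by
        rw [← hdiff, rank_CXC hG hC, h'.2.2]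
      refine SimpleGraph.Reachable.trans ?_ (ih h'.1 h'.2.1)
      apply SimpleGraph.Adj.reachable
      show (SimpleGraph.fromRel _).Adj _ _
      rw [SimpleGraph.fromRel_adj]
      constructor
      · intro hEq
        have hval : C * a * ctrans q C = C * c * ctrans q C := congrArg Subtype.val hEq
        rw [hval, sub_self] at hr1
        simp at hr1
      · left
        exact hr1
  exact haux X hchain hXh hXu

lemma range_eq_of_reachable (hG : Good q F) (htr : ∃ t : F, t + t ^ q ≠ 0) {r : ℕ}
    {A B : {A : Matrix ι ι F // IsHerm q A ∧ A.rank = r}}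
    (h : (rkGraph q (F := F) ι r).Reachable A B) :
    LinearMap.range A.1.mulVecLin = LinearMap.range B.1.mulVecLin := by
  obtain ⟨w⟩ := h
  induction w with
  | nil => rfl
  | cons hadj p ih =>
    rename_i u v w'
    refine Eq.trans ?_ ih
    have hadj2 : (SimpleGraph.fromRel fun A B => (A.1 - B.1).rank = 1).Adj u v := hadj
    rw [SimpleGraph.fromRel_adj] at hadj2
    obtain ⟨hne, hcase⟩ := hadj2
    have hrk : u.1.rank = v.1.rank := by rw [u.2.2, v.2.2]
    rcases hcase with h1 | h1
    · exact range_eq_of_step hG htr u.2.1 v.2.1 hrk h1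
    · exact (range_eq_of_step hG htr v.2.1 u.2.1 hrk.symm h1).symm

lemma exists_basis_matrix {W : Submodule F (ι → F)} {k' : ℕ} (hW : finrank F W = k') :
    ∃ C : Matrix ι (Fin k') F, Function.Injective C.mulVecLin ∧
      LinearMap.range C.mulVecLin = W := by
  classical
  let b : Basis (Fin k') F W := Module.finBasisOfFinrankEq F W hW
  set C : Matrix ι (Fin k') F := Matrix.of fun i j => (b j : ι → F) i with hC
  have hcoe : ∀ g : Fin k' → F, ((∑ j, g j • b j : W) : ι → F) = ∑ j, g j • (b j : ι → F) := by
    intro g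
    simp
  have hmv : ∀ g : Fin k' → F, C *ᵥ g = ((∑ j, g j • b j : W) : ι → F) := by
    intro g
    rw [hcoe]
    ext i
    rw [Matrix.mulVec, dotProduct, Finset.sum_apply]
    exact Finset.sum_congr rfl fun j _ => by
      simp [hC, mul_comm]
  have hker : ∀ g : Fin k' → F, C *ᵥ g = 0 → g = 0 := by
    intro g hg
    rw [hmv] at hg
    have h0 : (∑ j, g j • b j : W) = 0 := by
      exact Subtype.ext (by simpa using hg)
    have hli := Fintype.linearIndependent_iff.mp b.linearIndependent g h0
    ext j
    exact hli j
  refine ⟨C, ?_, ?_⟩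
  · intro u v huv
    have h0 : C *ᵥ (u - v) = 0 := by
      rw [Matrix.mulVec_sub]
      rw [show C.mulVecLin u = C *ᵥ u from rfl] at huv
      rw [show (C *ᵥ u : ι → F) = C *ᵥ v from huv]
      simp
    exact sub_eq_zero.mp (hker _ h0)
  · apply le_antisymm
    · rintro u ⟨g, rfl⟩
      rw [Matrix.mulVecLin_apply, hmv]
      exact (∑ j, g j • b j : W).2
    · intro u hu
      have hrepr := b.sum_repr ⟨u, hu⟩
      refine ⟨fun j => b.repr ⟨u, hu⟩ j, ?_⟩
      rw [Matrix.mulVecLin_apply, hmv, hrepr]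

lemma ctrans_fromColumns {m n₁ n₂ : Type*} (B₁ : Matrix m n₁ F) (B₂ : Matrix m n₂ F) :
    ctrans q (Matrix.fromCols B₁ B₂) = Matrix.fromRows (ctrans q B₁) (ctrans q B₂) := by
  ext i j
  cases i <;> rfl

lemma P_fromBlocks {α β : Type*} [Fintype α] [Fintype β]
    (P : Matrix (α ⊕ β) (α ⊕ β) F) (X : Matrix α α F) :
    P * Matrix.fromBlocks X 0 0 0 * ctrans q P
      = P.toCols₁ * X * ctrans q P.toCols₁ := by
  conv_lhs => rw [← Matrix.fromCols_toCols P]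
  rw [Matrix.fromCols_mul_fromBlocks, ctrans_fromColumns, Matrix.fromCols_mul_fromRows]
  simp [Matrix.mul_assoc]

lemma toCols₁_injective {α β : Type*} [Fintype α] [Fintype β] [DecidableEq α] [DecidableEq β]
    {P : Matrix (α ⊕ β) (α ⊕ β) F} (hP : IsUnit P) :
    Function.Injective P.toCols₁.mulVecLin := by
  have hPinj : Function.Injective P.mulVec := Matrix.mulVec_injective_iff_isUnit.mpr hP
  intro u v huv
  have h1 : ∀ w : α → F, P.toCols₁ *ᵥ w = P *ᵥ Sum.elim w 0 := by
    intro w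
    ext i
    rw [Matrix.mulVec, Matrix.mulVec, dotProduct, dotProduct,
      Fintype.sum_sum_type]
    simp [Matrix.toCols₁]
  have h2 : P *ᵥ Sum.elim u 0 = P *ᵥ Sum.elim v 0 := by
    rw [← h1, ← h1]
    exact huv
  have h3 := hPinj h2
  ext a
  exact congrFun h3 (Sum.inl a)

lemma exists_P {k' m' : ℕ} {W : Submodule F ((Fin k' ⊕ Fin m') → F)}
    (hW : finrank F W = k') :
    ∃ P : Matrix (Fin k' ⊕ Fin m') (Fin k' ⊕ Fin m') F, IsUnit P ∧
      LinearMap.range P.toCols₁.mulVecLin = W := by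
  classical
  obtain ⟨W', hcompl⟩ := Submodule.exists_isCompl W
  have htot : finrank F W + finrank F W' = k' + m' := by
    rw [Submodule.finrank_add_eq_of_isCompl hcompl, Module.finrank_pi]
    simp
  have hW' : finrank F W' = m' := by omega
  obtain ⟨C, hCinj, hCrange⟩ := exists_basis_matrix hW
  obtain ⟨C', hC'inj, hC'range⟩ := exists_basis_matrix hW'
  refine ⟨Matrix.fromCols C C', ?_, ?_⟩
  · rw [← Matrix.mulVec_surjective_iff_isUnit]
    intro y
    have hy : y ∈ W ⊔ W' := by rw [hcompl.sup_eq_top]; trivial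
    obtain ⟨w1, hw1, w2, hw2, rfl⟩ := Submodule.mem_sup.mp hy
    rw [← hCrange] at hw1
    rw [← hC'range] at hw2
    obtain ⟨a, ha⟩ := hw1
    obtain ⟨b, hb⟩ := hw2
    refine ⟨Sum.elim a b, ?_⟩
    rw [Matrix.fromCols_mulVec_sumElim]
    rw [show C *ᵥ a = C.mulVecLin a from rfl, show C' *ᵥ b = C'.mulVecLin b from rfl, ha, hb]
  · rw [show (Matrix.fromCols C C').toCols₁ = C from rfl]
    exact hCrange

end Graph

section Key
open Module
variable {ι : Type*} [Fintype ι] [DecidableEq ι]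

lemma key_iff (hG : Good q F) (hq3 : 3 ≤ q) [Fintype F] (hF : Fintype.card F = q ^ 2) {r : ℕ}
    (A B : {A : Matrix ι ι F // IsHerm q A ∧ A.rank = r}) :
    (rkGraph q (F := F) ι r).Reachable A B ↔
      LinearMap.range A.1.mulVecLin = LinearMap.range B.1.mulVecLin := by
  constructor
  · exact range_eq_of_reachable hG (exists_trace_ne_zero hG hq3 hF)
  · intro hr
    have hfin : finrank F (LinearMap.range A.1.mulVecLin) = r := A.2.2
    obtain ⟨C, hCinj, hCrange⟩ := exists_basis_matrix hfin
    obtain ⟨X, hXh, hXu, hAX⟩ := herm_decomp hG A.2.1 hCinj hCrange.symm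
    obtain ⟨Y, hYh, hYu, hBY⟩ := herm_decomp hG B.2.1 hCinj (by rw [← hr]; exact hCrange.symm)
    have hA' : A = ⟨C * X * ctrans q C, vert_spec hG hCinj (Fintype.card_fin r) hXh hXu⟩ :=
      Subtype.ext hAX
    have hB' : B = ⟨C * Y * ctrans q C, vert_spec hG hCinj (Fintype.card_fin r) hYh hYu⟩ :=
      Subtype.ext hBY
    rw [hA', hB']
    exact reachable_of_decomp hG hq3 hF hCinj (Fintype.card_fin r) hXh hXu hYh hYu

lemma mem_Pset_iff (hG : Good q F) {k' m' : ℕ}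
    {P : Matrix (Fin k' ⊕ Fin m') (Fin k' ⊕ Fin m') F} (hPu : IsUnit P)
    (B : {A : Matrix (Fin k' ⊕ Fin m') (Fin k' ⊕ Fin m') F // IsHerm q A ∧ A.rank = k'}) :
    (∃ X : Matrix (Fin k') (Fin k') F, IsHerm q X ∧ IsUnit X ∧
      B.1 = P * Matrix.fromBlocks X 0 0 0 * ctrans q P) ↔
      LinearMap.range B.1.mulVecLin = LinearMap.range P.toCols₁.mulVecLin := by
  constructor
  · rintro ⟨X, hXh, hXu, hBX⟩
    rw [hBX, P_fromBlocks]
    exact range_CXC hG (toCols₁_injective hPu) hXu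
  · intro hr
    obtain ⟨X, hXh, hXu, hBX⟩ := herm_decomp hG B.2.1 (toCols₁_injective hPu) hr
    exact ⟨X, hXh, hXu, by rw [hBX, P_fromBlocks]⟩

end Key

end Stmt14

/-- **Remark after Lemma 3.7.** Let `q ≥ 3`, `n ≥ 2`, `1 ≤ k ≤ n − 2` (here the index set
is `Fin k ⊕ Fin m` with `m = n − k ≥ 2`).  The connected components of the graph of
hermitian `n × n` matrices of rank `k` are precisely the sets
`{P (Ẋ ⊕ 0_{n−k}) P* : Ẋ ∈ HGL_k(F_{q²})}` for invertible `P`, and the number of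
components equals the number of `k`-dimensional subspaces of `F_{q²}ⁿ` (the Gaussian
binomial coefficient `[n choose k]` with parameter `q²`). -/
theorem stmt14 (q k m : ℕ) (hq : IsPrimePow q) (hq3 : 3 ≤ q) (hk : 1 ≤ k) (hm : 2 ≤ m)
    (F : Type*) [Field F] [Fintype F] (hF : Fintype.card F = q ^ 2) :
    (∀ S : Set {A : Matrix (Fin k ⊕ Fin m) (Fin k ⊕ Fin m) F // IsHerm q A ∧ A.rank = k},
      (∃ c : (rkGraph q (F := F) (Fin k ⊕ Fin m) k).ConnectedComponent, S = c.supp) ↔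
      (∃ P : Matrix (Fin k ⊕ Fin m) (Fin k ⊕ Fin m) F, IsUnit P ∧
        S = {A | ∃ X : Matrix (Fin k) (Fin k) F, IsHerm q X ∧ IsUnit X ∧
          A.1 = P * Matrix.fromBlocks X 0 0 0 * ctrans q P})) ∧
    Nat.card (rkGraph q (F := F) (Fin k ⊕ Fin m) k).ConnectedComponent =
      Nat.card {W : Submodule F ((Fin k ⊕ Fin m) → F) // Module.finrank F W = k} := by
  classical
  have hq0 : q ≠ 0 := by omega
  -- construct the `Good` bundle
  have hGood : Stmt14.Good q F := by
    obtain ⟨p, a, hp, ha, hpa⟩ := hq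
    have hpp : p.Prime := hp.nat_prime
    haveI hchar0 : CharP F (ringChar F) := ringChar.charP F
    obtain ⟨n', hrp, hcard⟩ := FiniteField.card F (ringChar F)
    have hpr : p = ringChar F := by
      have h1 : p ∣ ringChar F ^ (n' : ℕ) := by
        rw [← hcard, hF, ← hpa, ← pow_mul]
        exact dvd_pow_self p (by positivity)
      have h2 : p ∣ ringChar F := hpp.dvd_of_dvd_pow h1
      exact (Nat.prime_dvd_prime_iff_eq hpp hrp).mp h2
    haveI hchar : CharP F p := hpr ▸ hchar0
    haveI : Fact p.Prime := ⟨hpp⟩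
    refine ⟨hq0, ?_, ?_⟩
    · intro x y
      rw [← hpa]
      exact add_pow_char_pow x y p a
    · intro x
      rw [← pow_mul, show q * q = Fintype.card F by rw [hF]; ring]
      exact FiniteField.pow_card x
  have htr : ∃ t : F, t + t ^ q ≠ 0 := Stmt14.exists_trace_ne_zero hGood hq3 hF
  have h1h : IsHerm q (1 : Matrix (Fin k) (Fin k) F) := hGood.ctrans_one
  constructor
  · intro S
    constructor
    · rintro ⟨c, rfl⟩
      obtain ⟨A₀, hA₀0⟩ := c.exists_rep
      have hA₀ : (rkGraph q (F := F) (Fin k ⊕ Fin m) k).connectedComponentMk A₀ = c := hA₀0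
      have hfin : Module.finrank F (LinearMap.range A₀.1.mulVecLin) = k := A₀.2.2
      obtain ⟨P, hPu, hPrange⟩ := Stmt14.exists_P hfin
      refine ⟨P, hPu, ?_⟩
      ext B
      rw [SimpleGraph.ConnectedComponent.mem_supp_iff, ← hA₀, SimpleGraph.ConnectedComponent.eq,
        Set.mem_setOf_eq, Stmt14.key_iff hGood hq3 hF, Stmt14.mem_Pset_iff hGood hPu B, hPrange]
    · rintro ⟨P, hPu, rfl⟩
      have hC₁ := Stmt14.toCols₁_injective hPu
      set A₀ : {A : Matrix (Fin k ⊕ Fin m) (Fin k ⊕ Fin m) F // IsHerm q A ∧ A.rank = k} :=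
        ⟨P.toCols₁ * (1 : Matrix (Fin k) (Fin k) F) * ctrans q P.toCols₁,
          Stmt14.vert_spec hGood hC₁ (Fintype.card_fin k) h1h isUnit_one⟩ with hA₀def
      refine ⟨(rkGraph q (F := F) (Fin k ⊕ Fin m) k).connectedComponentMk A₀, ?_⟩
      ext B
      rw [SimpleGraph.ConnectedComponent.mem_supp_iff, SimpleGraph.ConnectedComponent.eq,
        Set.mem_setOf_eq, Stmt14.key_iff hGood hq3 hF, Stmt14.mem_Pset_iff hGood hPu B]
      have hA0r : LinearMap.range A₀.1.mulVecLin
          = LinearMap.range P.toCols₁.mulVecLin := by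
        rw [hA₀def]
        exact Stmt14.range_CXC hGood hC₁ isUnit_one
      rw [hA0r]
  · set G := rkGraph q (F := F) (Fin k ⊕ Fin m) k with hG
    set f : G.ConnectedComponent → {W : Submodule F ((Fin k ⊕ Fin m) → F) //
        Module.finrank F W = k} :=
      SimpleGraph.ConnectedComponent.lift
        (fun v => ⟨LinearMap.range v.1.mulVecLin, v.2.2⟩)
        (fun v w p _ => Subtype.ext
          (Stmt14.range_eq_of_reachable hGood htr ⟨p⟩)) with hf
    have hinj : Function.Injective f := by
      intro c₁ c₂ hcc
      obtain ⟨v, hv0⟩ := c₁.exists_rep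
      obtain ⟨w, hw0⟩ := c₂.exists_rep
      have hv : G.connectedComponentMk v = c₁ := hv0
      have hw : G.connectedComponentMk w = c₂ := hw0
      rw [← hv, ← hw] at hcc ⊢
      rw [hf, SimpleGraph.ConnectedComponent.lift_mk, SimpleGraph.ConnectedComponent.lift_mk]
        at hcc
      have hr : LinearMap.range v.1.mulVecLin = LinearMap.range w.1.mulVecLin :=
        congrArg Subtype.val hcc
      exact SimpleGraph.ConnectedComponent.eq.mpr
        ((Stmt14.key_iff hGood hq3 hF v w).mpr hr)
    have hsurj : Function.Surjective f := by
      rintro ⟨W, hW⟩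
      obtain ⟨C, hCinj, hCrange⟩ := Stmt14.exists_basis_matrix hW
      refine ⟨G.connectedComponentMk
        ⟨C * (1 : Matrix (Fin k) (Fin k) F) * ctrans q C,
          Stmt14.vert_spec hGood hCinj (Fintype.card_fin k) h1h isUnit_one⟩,
        ?_⟩
      rw [hf, SimpleGraph.ConnectedComponent.lift_mk]
      apply Subtype.ext
      show LinearMap.range (C * (1 : Matrix (Fin k) (Fin k) F) * ctrans q C).mulVecLin = W
      rw [Stmt14.range_CXC hGood hCinj isUnit_one, hCrange]
    exact Nat.card_congr (Equiv.ofBijective f ⟨hinj, hsurj⟩)
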